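/- For a tridiagonal Toeplitz matrix M of size λ×λ with diagonal entries ω+κ, subdiagonal entries -ω, and superdiagonal entries -κ (where ω,κ > 0 and M is invertible), the ratio of the (λ,1) entry to the (1,λ) entry of M⁻¹ equals (ω/κ)^(λ-1). -/

import Mathlib

open Matrix

/-- Tridiagonal Toeplitz matrix with diagonal ω+κ, subdiagonal -ω, superdiagonal -κ. -/
def tridiag (lam : ℕ) (ω κ : ℝ) : Matrix (Fin lam) (Fin lam) ℝ :=
  Matrix.of fun i j =>
    if i = j then ω + κ
    else if (i : ℕ) = (j : ℕ) + 1 then -ω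
    else if (j : ℕ) = (i : ℕ) + 1 then -κ
    else 0

lemma tridiag_transpose (lam : ℕ) (ω κ : ℝ) :
    (tridiag lam ω κ)ᵀ = tridiag lam κ ω := by
  ext i j
  simp only [tridiag, transpose_apply, of_apply]
  split_ifs <;> first | ring1 | (exfalso; simp only [Fin.ext_iff] at *; omega)

lemma adj_corner (n : ℕ) (ω κ : ℝ) :
    (tridiag (n + 1) ω κ).adjugate (Fin.last n) 0 = ω ^ n := by
  rw [adjugate_apply, det_succ_row_zero]
  rw [Finset.sum_eq_single (Fin.last n)]
  · have h1 : ((tridiag (n + 1) ω κ).updateRow 0 (Pi.single (Fin.last n) 1)) 0 (Fin.last n) = 1 := by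
      simp [updateRow_apply]
    rw [h1]
    have h2 : (((tridiag (n + 1) ω κ).updateRow 0 (Pi.single (Fin.last n) 1)).submatrix
        Fin.succ (Fin.last n).succAbove).det = (-ω) ^ n := by
      rw [det_of_upperTriangular]
      · rw [Finset.prod_congr rfl (g := fun _ => -ω), Finset.prod_const, Finset.card_univ,
          Fintype.card_fin]
        intro i _
        simp only [submatrix_apply, Fin.succAbove_last, updateRow_apply, tridiag, of_apply]
        rw [if_neg (Fin.succ_ne_zero i)]
        rw [if_neg, if_pos] <;> simp [Fin.ext_iff]
      · intro i j hij
        simp only [id] at hij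
        simp only [submatrix_apply, Fin.succAbove_last, updateRow_apply, tridiag, of_apply]
        rw [if_neg (Fin.succ_ne_zero i)]
        rw [if_neg, if_neg, if_neg] <;> simp [Fin.ext_iff] <;> omega
    rw [h2]
    have : ((-1 : ℝ)) ^ ((Fin.last n : ℕ)) = (-1) ^ n := by simp
    rw [this, neg_pow ω]
    have h3 : ((-1:ℝ)) ^ n * 1 * ((-1) ^ n * ω ^ n) = ((-1) * (-1) : ℝ) ^ n * ω ^ n := by
      rw [mul_pow]; ring
    rw [h3]; norm_num
  · intro j _ hj
    have : ((tridiag (n + 1) ω κ).updateRow 0 (Pi.single (Fin.last n) 1)) 0 j = 0 := by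
      simp [updateRow_apply, Pi.single_apply, hj]
    rw [this]; ring
  · simp

theorem stmt_0 (lam : ℕ) (hlam : 2 ≤ lam) (ω κ : ℝ) (hω : 0 < ω) (hκ : 0 < κ)
    (hM : IsUnit (tridiag lam ω κ).det) :
    (tridiag lam ω κ)⁻¹ ⟨lam - 1, by omega⟩ ⟨0, by omega⟩ /
      (tridiag lam ω κ)⁻¹ ⟨0, by omega⟩ ⟨lam - 1, by omega⟩ = (ω / κ) ^ (lam - 1) := by
  obtain ⟨n, rfl⟩ : ∃ n, lam = n + 1 := ⟨lam - 1, by omega⟩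
  have hdet : (tridiag (n + 1) ω κ).det ≠ 0 := hM.ne_zero
  have hlast : (⟨n + 1 - 1, by omega⟩ : Fin (n + 1)) = Fin.last n := rfl
  have h0 : (⟨0, by omega⟩ : Fin (n + 1)) = 0 := rfl
  rw [hlast, h0, Matrix.inv_def]
  have hA : (tridiag (n + 1) ω κ).adjugate (Fin.last n) 0 = ω ^ n := adj_corner n ω κ
  have hB : (tridiag (n + 1) ω κ).adjugate 0 (Fin.last n) = κ ^ n := by
    have := adj_corner n κ ω
    rw [← tridiag_transpose, ← adjugate_transpose] at this
    simpa using this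
  simp only [Matrix.smul_apply, smul_eq_mul, hA, hB, Ring.inverse_eq_inv']
  have hinv : ((tridiag (n + 1) ω κ).det)⁻¹ ≠ 0 := inv_ne_zero hdet
  rw [mul_div_mul_left _ _ hinv, div_pow]
  simp
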